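/- Let Σ be a spacelike hypersurface of M×ℝ with no horizontal points, with Riemannian unit normal N, angle function θ satisfying 2θ² > 1, and Lorentzian unit normal N_L = μΦ(N) where μ = −(2θ²−1)^{−1/2}. Then the Lorentzian and Riemannian shape operators satisfy ⟨A_L X, Y⟩_L = μ⟨AX,Y⟩ for all X,Y tangent to Σ, and the mean curvatures satisfy H_L + μH = μ(1−μ²)⟨AT,T⟩ with T = ∇ξ/‖∇ξ‖. -/

import Mathlib

open scoped RealInnerProductSpace

/-- At a point of a spacelike hypersurface `Σ ⊂ M × ℝ` with no horizontal
points (unit normal `N`, angle function `θ` with `2θ² > 1`, `θ² ≠ 1`,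
Lorentzian normal `N_L = μΦ(N)` with `μ = -(2θ²-1)^{-1/2}`), the Lorentzian
and Riemannian shape operators satisfy `⟨A_L X, Y⟩_L = μ⟨AX, Y⟩` for tangent
`X, Y`, and the mean curvatures satisfy
`H_L + μH = μ(1-μ²)⟨AT, T⟩` with `T = ∇ξ/‖∇ξ‖`. -/
theorem stmt_4 {E : Type*} [NormedAddCommGroup E] [InnerProductSpace ℝ E] {n : ℕ}
    (t N : E) (ht : ‖t‖ = 1) (hN : ‖N‖ = 1)
    (θ : ℝ) (hθ : θ = ⟪N, t⟫) (hsp : 2 * θ ^ 2 > 1) (hnh : θ ^ 2 ≠ 1)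
    (μ : ℝ) (hμ : μ = -(Real.sqrt (2 * θ ^ 2 - 1))⁻¹)
    (Φ : E → E) (hΦ : ∀ X, Φ X = X - (2 * ⟪X, t⟫) • t)
    (L : E → E → ℝ) (hL : ∀ X Y, L X Y = ⟪X, Y⟫ - 2 * ⟪X, t⟫ * ⟪Y, t⟫)
    (NL : E) (hNL : NL = μ • Φ N)
    (A AL : E →ₗ[ℝ] E) (Γ : E → E → E)
    (hAΓ : ∀ X Y, ⟪X, N⟫ = 0 → ⟪Y, N⟫ = 0 → ⟪A X, Y⟫ = ⟪Γ X Y, N⟫)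
    (hALΓ : ∀ X Y, ⟪X, N⟫ = 0 → ⟪Y, N⟫ = 0 → L (AL X) Y = L (Γ X Y) NL)
    (T : E) (hT : T = (Real.sqrt (1 - θ ^ 2))⁻¹ • (t - θ • N))
    (X : Fin (n + 1) → E)
    (hXtan : ∀ i, ⟪X i, N⟫ = 0)
    (hXon : ∀ i j, ⟪X i, X j⟫ = if i = j then 1 else 0)
    (hXhor : ∀ i : Fin n, ⟪X i.castSucc, t⟫ = 0)
    (hXlast : X (Fin.last n) = T)
    (c : Fin (n + 1) → Fin (n + 1) → ℝ)
    (hc : ∀ j, AL (X j) = ∑ i, c i j • X i)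
    (H HL : ℝ)
    (hH : H = ∑ i, ⟪A (X i), X i⟫)
    (hHL : HL = -∑ i, c i i) :
    (∀ Y Z, ⟪Y, N⟫ = 0 → ⟪Z, N⟫ = 0 → L (AL Y) Z = μ * ⟪A Y, Z⟫) ∧
    HL + μ * H = μ * (1 - μ ^ 2) * ⟪A T, T⟫ := by

  have htt : ⟪t, t⟫ = (1:ℝ) := by
    rw [real_inner_self_eq_norm_mul_norm, ht]; norm_num
  have hNt : ⟪N, t⟫ = θ := hθ.symm
  have hd : (0:ℝ) < 2 * θ ^ 2 - 1 := by linarith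
  have hθ1 : θ ^ 2 < 1 := by
    have h1 : |θ| ≤ 1 := by
      rw [hθ]
      calc |⟪N, t⟫| ≤ ‖N‖ * ‖t‖ := abs_real_inner_le_norm N t
        _ = 1 := by rw [hN, ht]; ring
    have h2 : θ ^ 2 ≤ 1 := by nlinarith [abs_nonneg θ, sq_abs θ]
    exact lt_of_le_of_ne h2 hnh
  set s := Real.sqrt (1 - θ ^ 2) with hs
  have hs2 : s ^ 2 = 1 - θ ^ 2 := Real.sq_sqrt (by linarith)
  have hspos : 0 < s := Real.sqrt_pos.mpr (by linarith)
  have hsq : Real.sqrt (2 * θ ^ 2 - 1) ^ 2 = 2 * θ ^ 2 - 1 := Real.sq_sqrt hd.le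
  have hsqpos : 0 < Real.sqrt (2 * θ ^ 2 - 1) := Real.sqrt_pos.mpr hd
  have hμ2 : μ ^ 2 * (2 * θ ^ 2 - 1) = 1 := by
    rw [hμ, show (-(Real.sqrt (2 * θ ^ 2 - 1))⁻¹) ^ 2
        = ((Real.sqrt (2 * θ ^ 2 - 1)) ^ 2)⁻¹ by ring, hsq]
    exact inv_mul_cancel₀ hd.ne'
  have hkey : ∀ W : E, L W NL = μ * ⟪W, N⟫ := by
    intro W
    rw [hL, hNL, hΦ, hNt]
    simp only [inner_sub_left, inner_sub_right, real_inner_smul_left,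
      real_inner_smul_right, htt, hNt]
    ring
  have part1 : ∀ Y Z, ⟪Y, N⟫ = 0 → ⟪Z, N⟫ = 0 → L (AL Y) Z = μ * ⟪A Y, Z⟫ := by
    intro Y Z hY hZ
    rw [hALΓ Y Z hY hZ, hkey, hAΓ Y Z hY hZ]
  have hτ : ∀ i, ⟪X i, t⟫ = if i = Fin.last n then s else 0 := by
    intro i
    rcases eq_or_ne i (Fin.last n) with rfl | h
    · rw [if_pos rfl, hXlast, hT, real_inner_smul_left, inner_sub_left,
        real_inner_smul_left, htt, hNt]
      have h1 : 1 - θ * θ = s * s := by nlinarith [hs2]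
      rw [h1]
      field_simp
    · rw [if_neg h]
      obtain ⟨m, rfl⟩ := Fin.exists_castSucc_eq.mpr h
      exact hXhor m
  have hLXX : ∀ k i, L (X k) (X i) = if k = i then 1 - 2 * ⟪X i, t⟫ ^ 2 else 0 := by
    intro k i
    rw [hL, hXon]
    rcases eq_or_ne k i with rfl | h
    · simp; ring
    · rw [if_neg h, if_neg h]
      have hz : ⟪X k, t⟫ * ⟪X i, t⟫ = 0 := by
        rw [hτ k, hτ i]
        rcases eq_or_ne k (Fin.last n) with rfl | hk
        · rw [if_neg (Ne.symm h)]; ring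
        · rw [if_neg hk]; ring
      linarith [hz]
  have hdiag : ∀ i, μ * ⟪A (X i), X i⟫ = c i i * (1 - 2 * ⟪X i, t⟫ ^ 2) := by
    intro i
    rw [← part1 _ _ (hXtan i) (hXtan i), hc i]
    have hlin : L (∑ k, c k i • X k) (X i) = ∑ k, c k i * L (X k) (X i) := by
      simp only [hL, sum_inner, real_inner_smul_left]
      rw [Finset.mul_sum, Finset.sum_mul, ← Finset.sum_sub_distrib]
      exact Finset.sum_congr rfl fun k _ => by ring
    rw [hlin]
    simp only [hLXX, mul_ite, mul_zero]
    rw [Finset.sum_ite_eq' Finset.univ i (fun k => c k i * (1 - 2 * ⟪X i, t⟫ ^ 2))]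
    simp
  have hcc : ∀ m : Fin n, c m.castSucc m.castSucc
      = μ * ⟪A (X m.castSucc), X m.castSucc⟫ := by
    intro m
    have h1 := hdiag m.castSucc
    rw [hXhor m] at h1
    rw [h1]; ring
  have hclast : c (Fin.last n) (Fin.last n) = μ ^ 3 * ⟪A T, T⟫ := by
    have h1 := hdiag (Fin.last n)
    rw [hτ (Fin.last n), if_pos rfl, hXlast] at h1
    have h2 : 1 - 2 * s ^ 2 = 2 * θ ^ 2 - 1 := by linarith [hs2]
    rw [h2] at h1
    have h3 : c (Fin.last n) (Fin.last n) * (2 * θ ^ 2 - 1) = μ * ⟪A T, T⟫ := h1.symm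
    calc c (Fin.last n) (Fin.last n)
        = c (Fin.last n) (Fin.last n) * (μ ^ 2 * (2 * θ ^ 2 - 1)) := by
          rw [hμ2, mul_one]
      _ = μ ^ 2 * (c (Fin.last n) (Fin.last n) * (2 * θ ^ 2 - 1)) := by ring
      _ = μ ^ 2 * (μ * ⟪A T, T⟫) := by rw [h3]
      _ = μ ^ 3 * ⟪A T, T⟫ := by ring
  refine ⟨part1, ?_⟩
  rw [hHL, hH, Fin.sum_univ_castSucc, Fin.sum_univ_castSucc, hXlast, hclast]
  simp only [hcc]
  rw [mul_add, Finset.mul_sum]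
  ring
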